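/- For every u in the domain {u ∈ H¹((−1,1),ℂ²) : u₂(±1) = ∓u₁(±1)} and parameters k ∈ ℝ, m ≥ 0, the operator T(k,m)u := −iσ₂u' + kσ₁u + mσ₃u satisfies ‖T(k,m)u‖²_{L²} = ‖u'‖²_{L²} + (m²+k²)‖u‖²_{L²} + m(|u(1)|² + |u(−1)|²). -/

import Mathlib

open Real MeasureTheory

noncomputable section

abbrev E2 : Type := EuclideanSpace ℂ (Fin 2)

def vec2 (a b : ℂ) : E2 := WithLp.toLp 2 ![a, b]

def muI : Measure ℝ := volume.restrict (Set.Ioo (-1) 1)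

/-- `f ∈ H¹((-1,1),ℂ²)` with weak derivative `g` and the infinite-mass boundary
conditions `u₂(±1) = ∓u₁(±1)`. -/
def IsH1BC (f g : ℝ → E2) : Prop :=
  MemLp g 2 muI ∧
  (∀ t ∈ Set.Icc (-1 : ℝ) 1, f t = f (-1) + ∫ s in (-1 : ℝ)..t, g s) ∧
  f 1 1 = - f 1 0 ∧ f (-1) 1 = f (-1) 0

section Aux

open Filter ComplexConjugate

instance : IsFiniteMeasure muI := by
  constructor
  simp [muI, Real.volume_Ioo]

lemma muI_singleton (t : ℝ) : muI {t} = 0 :=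
  le_antisymm ((Measure.restrict_apply_le _ _).trans (by simp)) zero_le

lemma point_id (k m : ℝ) (a b ga gb : ℂ) :
    ‖-gb + (k:ℂ)*b + (m:ℂ)*a‖^2 + ‖ga + (k:ℂ)*a - (m:ℂ)*b‖^2
    = (‖ga‖^2 + ‖gb‖^2) + (m^2+k^2)*(‖a‖^2+‖b‖^2)
      + k*(((a*(starRingEnd ℂ) ga + ga*(starRingEnd ℂ) a)
            - (b*(starRingEnd ℂ) gb + gb*(starRingEnd ℂ) b)).re)
      + m*(-(((a*(starRingEnd ℂ) gb + ga*(starRingEnd ℂ) b)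
            + (b*(starRingEnd ℂ) ga + gb*(starRingEnd ℂ) a)).re)) := by
  simp only [← Complex.normSq_eq_norm_sq, Complex.normSq_apply,
    Complex.add_re, Complex.add_im, Complex.sub_re, Complex.sub_im, Complex.neg_re,
    Complex.neg_im, Complex.mul_re, Complex.mul_im, Complex.conj_re, Complex.conj_im,
    Complex.ofReal_re, Complex.ofReal_im]
  ring

lemma norm_E2 (x : E2) : ‖x‖^2 = ‖x 0‖^2 + ‖x 1‖^2 := by
  rw [EuclideanSpace.norm_eq, Real.sq_sqrt (by positivity)]
  simp [Fin.sum_univ_two]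

lemma norm_vec2 (a b : ℂ) : ‖vec2 a b‖^2 = ‖a‖^2 + ‖b‖^2 := by
  rw [norm_E2]
  simp [vec2]

lemma ind1 (p q : ℝ → ℂ) (t : ℝ) :
    ∀ s, Set.indicator {w : ℝ × ℝ | w.1 < w.2} (fun w => p w.1 * q w.2) (s, t)
      = Set.indicator (Set.Iio t) p s * q t := by
  intro s
  by_cases h : s < t <;> simp [Set.indicator_apply, h]

lemma ind2 (p q : ℝ → ℂ) (s : ℝ) :
    ∀ t, Set.indicator {w : ℝ × ℝ | w.1 < w.2} (fun w => q w.1 * p w.2) (s, t)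
      = Set.indicator (Set.Ioi s) p t * q s := by
  intro t
  by_cases h : s < t <;> simp [Set.indicator_apply, h, mul_comm]

lemma partsInt (p q : ℝ → ℂ) (hp : Integrable p muI) (hq : Integrable q muI) :
    Integrable (fun t => (∫ s in Set.Iio t, p s ∂muI) * q t) muI := by
  have hF : Integrable (fun w : ℝ × ℝ => Set.indicator {w : ℝ × ℝ | w.1 < w.2}
      (fun w => p w.1 * q w.2) w) (muI.prod muI) :=
    (hp.mul_prod hq).indicator (measurableSet_lt measurable_fst measurable_snd)
  have h2 := hF.integral_prod_right
  refine h2.congr (Eventually.of_forall fun t => ?_)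
  simp_rw [ind1 p q t]
  rw [← integral_indicator measurableSet_Iio]
  exact (integral_mul_const (q t) _)

lemma partsIntIoi (p q : ℝ → ℂ) (hp : Integrable p muI) (hq : Integrable q muI) :
    Integrable (fun s => (∫ t in Set.Ioi s, p t ∂muI) * q s) muI := by
  have hG : Integrable (fun w : ℝ × ℝ => Set.indicator {w : ℝ × ℝ | w.1 < w.2}
      (fun w => q w.1 * p w.2) w) (muI.prod muI) :=
    (hq.mul_prod hp).indicator (measurableSet_lt measurable_fst measurable_snd)
  refine hG.integral_prod_left.congr (Eventually.of_forall fun s => ?_)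
  simp_rw [ind2 p q s]
  rw [← integral_indicator measurableSet_Ioi]
  exact (integral_mul_const (q s) _)

lemma parts (p q : ℝ → ℂ) (hp : Integrable p muI) (hq : Integrable q muI) (c d : ℂ) :
    ∫ t, ((c + ∫ s in Set.Iio t, p s ∂muI) * q t
          + p t * (d + ∫ s in Set.Iio t, q s ∂muI)) ∂muI
    = (c + ∫ s, p s ∂muI) * (d + ∫ s, q s ∂muI) - c * d := by
  have hPq := partsInt p q hp hq
  have hpQ' := partsInt q p hq hp
  have hpQ : Integrable (fun t => p t * (∫ s in Set.Iio t, q s ∂muI)) muI :=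
    hpQ'.congr (Eventually.of_forall fun t => mul_comm _ _)
  have hIoi := partsIntIoi p q hp hq
  have key : (∫ t, (∫ s in Set.Iio t, p s ∂muI) * q t ∂muI)
      + (∫ t, p t * (∫ s in Set.Iio t, q s ∂muI) ∂muI)
      = (∫ s, p s ∂muI) * (∫ s, q s ∂muI) := by
    have hG : Integrable (fun w : ℝ × ℝ => Set.indicator {w : ℝ × ℝ | w.1 < w.2}
        (fun w => q w.1 * p w.2) w) (muI.prod muI) :=
      (hq.mul_prod hp).indicator (measurableSet_lt measurable_fst measurable_snd)
    have hswap : (∫ t, p t * (∫ s in Set.Iio t, q s ∂muI) ∂muI)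
        = ∫ s, (∫ t in Set.Ioi s, p t ∂muI) * q s ∂muI := by
      have h1 : (∫ t, p t * (∫ s in Set.Iio t, q s ∂muI) ∂muI)
          = ∫ t, (∫ s, Set.indicator {w : ℝ × ℝ | w.1 < w.2}
              (fun w => q w.1 * p w.2) (s, t) ∂muI) ∂muI := by
        refine integral_congr_ae (Eventually.of_forall fun t => ?_)
        simp_rw [ind1 q p t]
        rw [← integral_indicator measurableSet_Iio, integral_mul_const, mul_comm]
      rw [h1]
      rw [integral_integral_swap (f := fun t s => Set.indicator {w : ℝ × ℝ | w.1 < w.2}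
            (fun w => q w.1 * p w.2) (s, t)) hG.swap]
      refine integral_congr_ae (Eventually.of_forall fun s => ?_)
      simp_rw [ind2 p q s]
      rw [← integral_indicator measurableSet_Ioi]
      exact (integral_mul_const (q s) _)
    rw [hswap, ← integral_add hPq hIoi]
    have : ∀ t, (∫ s in Set.Iio t, p s ∂muI) * q t + (∫ s in Set.Ioi t, p s ∂muI) * q t
        = (∫ s, p s ∂muI) * q t := by
      intro t
      rw [← add_mul]
      congr 1
      have hdisj : Disjoint (Set.Iio t) (Set.Ioi t) :=
        Set.disjoint_left.mpr fun x hx hx' => (lt_asymm (Set.mem_Iio.mp hx) (Set.mem_Ioi.mp hx')).elim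
      rw [← setIntegral_union hdisj measurableSet_Ioi hp.integrableOn hp.integrableOn,
        Set.Iio_union_Ioi]
      have h0 : ∫ s in ({t} : Set ℝ), p s ∂muI = 0 := by
        rw [show muI.restrict {t} = 0 from Measure.restrict_eq_zero.2 (muI_singleton t),
          integral_zero_measure]
      have hc := integral_add_compl (measurableSet_singleton t) hp
      rw [← hc, h0, zero_add]
    rw [integral_congr_ae (Eventually.of_forall this), integral_const_mul]
  have expand : ∀ t, (c + ∫ s in Set.Iio t, p s ∂muI) * q t
      + p t * (d + ∫ s in Set.Iio t, q s ∂muI)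
      = c * q t + ((∫ s in Set.Iio t, p s ∂muI) * q t)
        + (p t * d + p t * (∫ s in Set.Iio t, q s ∂muI)) := by
    intro t; ring
  rw [integral_congr_ae (Eventually.of_forall expand)]
  have h1 : Integrable (fun a => c * q a + (∫ s in Set.Iio a, p s ∂muI) * q a) muI :=
    (hq.const_mul c).add hPq
  have h2 : Integrable (fun a => p a * d + p a * (∫ s in Set.Iio a, q s ∂muI)) muI :=
    (hp.mul_const d).add hpQ
  rw [integral_add h1 h2, integral_add (hq.const_mul c) hPq,
    integral_add (hp.mul_const d) hpQ, integral_const_mul, integral_mul_const]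
  linear_combination key

lemma partsIntegrable (p q : ℝ → ℂ) (hp : Integrable p muI) (hq : Integrable q muI)
    (c d : ℂ) :
    Integrable (fun t => (c + ∫ s in Set.Iio t, p s ∂muI) * q t
      + p t * (d + ∫ s in Set.Iio t, q s ∂muI)) muI := by
  have hPq := partsInt p q hp hq
  have hpQ : Integrable (fun t => p t * (∫ s in Set.Iio t, q s ∂muI)) muI :=
    (partsInt q p hq hp).congr (Eventually.of_forall fun t => mul_comm _ _)
  have h1 : Integrable (fun a => c * q a + (∫ s in Set.Iio a, p s ∂muI) * q a) muI :=
    (hq.const_mul c).add hPq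
  have h2 : Integrable (fun a => p a * d + p a * (∫ s in Set.Iio a, q s ∂muI)) muI :=
    (hp.mul_const d).add hpQ
  exact (h1.add h2).congr (Eventually.of_forall fun t => by
    simp only [Pi.add_apply]; ring)

lemma intConj (q : ℝ → ℂ) (hq : Integrable q muI) :
    Integrable (fun t => (starRingEnd ℂ) (q t)) muI := by
  refine hq.mono ?_ (Eventually.of_forall fun t => by simp)
  exact Complex.continuous_conj.comp_aestronglyMeasurable hq.1

lemma pairCross (p q : ℝ → ℂ) (hp : Integrable p muI) (hq : Integrable q muI) (c d : ℂ) :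
    Integrable (fun t => (c + ∫ s in Set.Iio t, p s ∂muI) * (starRingEnd ℂ) (q t)
        + p t * (starRingEnd ℂ) (d + ∫ s in Set.Iio t, q s ∂muI)) muI ∧
    (∫ t, ((c + ∫ s in Set.Iio t, p s ∂muI) * (starRingEnd ℂ) (q t)
        + p t * (starRingEnd ℂ) (d + ∫ s in Set.Iio t, q s ∂muI)) ∂muI)
      = (c + ∫ s, p s ∂muI) * (starRingEnd ℂ) (d + ∫ s, q s ∂muI) - c * (starRingEnd ℂ) d := by
  have hq' : Integrable (fun t => (starRingEnd ℂ) (q t)) muI := intConj q hq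
  have hpt : ∀ t : ℝ, (starRingEnd ℂ) (d + ∫ s in Set.Iio t, q s ∂muI)
      = (starRingEnd ℂ) d + ∫ s in Set.Iio t, (starRingEnd ℂ) (q s) ∂muI := by
    intro t
    rw [map_add, integral_conj]
  constructor
  · exact (partsIntegrable p (fun t => (starRingEnd ℂ) (q t)) hp hq' c
      ((starRingEnd ℂ) d)).congr (Eventually.of_forall fun t => by simp only [hpt])
  · rw [integral_congr_ae (Eventually.of_forall fun t : ℝ => by simp only [hpt] :
      (fun t => (c + ∫ s in Set.Iio t, p s ∂muI) * (starRingEnd ℂ) (q t)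
        + p t * (starRingEnd ℂ) (d + ∫ s in Set.Iio t, q s ∂muI))
      =ᵐ[muI] (fun t => (c + ∫ s in Set.Iio t, p s ∂muI) * (starRingEnd ℂ) (q t)
        + p t * ((starRingEnd ℂ) d + ∫ s in Set.Iio t, (starRingEnd ℂ) (q s) ∂muI))),
      parts p (fun t => (starRingEnd ℂ) (q t)) hp hq' c ((starRingEnd ℂ) d),
      integral_conj, ← map_add]

end Aux

/-- For every `u = f` in the domain (with derivative `u' = g`) and `k ∈ ℝ`, `m ≥ 0`,
the transverse Dirac operator `T(k,m)u = -iσ₂u' + kσ₁u + mσ₃u` satisfies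
`‖T(k,m)u‖² = ‖u'‖² + (m²+k²)‖u‖² + m(|u(1)|² + |u(−1)|²)`. -/
theorem transverse_dirac_square_identity (k m : ℝ) (hm : 0 ≤ m)
    (f g : ℝ → E2) (hfg : IsH1BC f g) :
    (∫ t in (-1 : ℝ)..1,
        ‖vec2 (-(g t 1) + (k : ℂ) * f t 1 + (m : ℂ) * f t 0)
              (g t 0 + (k : ℂ) * f t 0 - (m : ℂ) * f t 1)‖^2) =
      (∫ t in (-1 : ℝ)..1, ‖g t‖^2) +
        (m^2 + k^2) * (∫ t in (-1 : ℝ)..1, ‖f t‖^2) +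
        m * (‖f 1‖^2 + ‖f (-1)‖^2) := by
  classical
  obtain ⟨hg2, hInt, hB1, hBm⟩ := hfg
  have hmem : ∀ᵐ t ∂muI, t ∈ Set.Ioo (-1:ℝ) 1 := by
    rw [muI]; exact ae_restrict_mem measurableSet_Ioo
  have hgI : Integrable g muI := hg2.integrable (by norm_num)
  have hpa : Integrable (fun t => g t 0) muI :=
    (EuclideanSpace.proj (0:Fin 2) : E2 →L[ℂ] ℂ).integrable_comp hgI
  have hpb : Integrable (fun t => g t 1) muI :=
    (EuclideanSpace.proj (1:Fin 2) : E2 →L[ℂ] ℂ).integrable_comp hgI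
  -- coordinates of f on [-1,1]
  have hcoord : ∀ t ∈ Set.Icc (-1:ℝ) 1, ∀ i : Fin 2,
      f t i = f (-1) i + ∫ s in Set.Iio t, g s i ∂muI := by
    intro t ht i
    have hii : IntervalIntegrable g volume (-1) t := by
      rw [intervalIntegrable_iff_integrableOn_Ioc_of_le ht.1]
      have hgOn : IntegrableOn g (Set.Ioo (-1:ℝ) 1) volume := by
        rw [IntegrableOn, ← muI]; exact hgI
      have h1 : IntegrableOn g (Set.Ioo (-1) t) volume :=
        hgOn.mono_set (Set.Ioo_subset_Ioo le_rfl ht.2)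
      exact h1.congr_set_ae Ioo_ae_eq_Ioc.symm
    have h2 : (∫ s in (-1:ℝ)..t, g s) i = ∫ s in (-1:ℝ)..t, g s i :=
      ((EuclideanSpace.proj i : E2 →L[ℂ] ℂ).intervalIntegral_comp_comm hii).symm
    have h3 : (∫ s in (-1:ℝ)..t, g s i) = ∫ s in Set.Iio t, g s i ∂muI := by
      rw [intervalIntegral.integral_of_le ht.1, integral_Ioc_eq_integral_Ioo]
      congr 1
      rw [muI, Measure.restrict_restrict measurableSet_Iio]
      congr 1
      ext x
      simp only [Set.mem_inter_iff, Set.mem_Iio, Set.mem_Ioo]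
      constructor
      · rintro ⟨h1', h2'⟩; exact ⟨h2', h1', lt_of_lt_of_le h2' ht.2⟩
      · rintro ⟨h1', h2', _⟩; exact ⟨h2', h1'⟩
    rw [hInt t ht]
    show f (-1) i + (∫ s in (-1:ℝ)..t, g s) i = _
    rw [h2, h3]
  have hfull : ∀ (h : ℝ → ℂ), (∫ s in Set.Iio (1:ℝ), h s ∂muI) = ∫ s, h s ∂muI := by
    intro h
    congr 1
    rw [muI, Measure.restrict_restrict measurableSet_Iio]
    congr 1
    ext x
    simp only [Set.mem_inter_iff, Set.mem_Iio, Set.mem_Ioo]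
    constructor
    · rintro ⟨_, h2'⟩; exact h2'
    · intro hx; exact ⟨hx.2, hx⟩
  have ha1 : f 1 0 = f (-1) 0 + ∫ s, g s 0 ∂muI := by
    rw [hcoord 1 (by norm_num) 0, hfull]
  have hb1 : f 1 1 = f (-1) 1 + ∫ s, g s 1 ∂muI := by
    rw [hcoord 1 (by norm_num) 1, hfull]
  -- pair cross terms
  obtain ⟨W1i, W1v⟩ := pairCross _ _ hpa hpa (f (-1) 0) (f (-1) 0)
  obtain ⟨W2i, W2v⟩ := pairCross _ _ hpb hpb (f (-1) 1) (f (-1) 1)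
  obtain ⟨W3i, W3v⟩ := pairCross _ _ hpa hpb (f (-1) 0) (f (-1) 1)
  obtain ⟨W4i, W4v⟩ := pairCross _ _ hpb hpa (f (-1) 1) (f (-1) 0)
  -- primitives are integrable and bounded
  have hA0 : Integrable (fun t => ∫ s in Set.Iio t, g s 0 ∂muI) muI := by
    simpa using partsInt _ (fun _ => (1:ℂ)) hpa (integrable_const 1)
  have hA1 : Integrable (fun t => ∫ s in Set.Iio t, g s 1 ∂muI) muI := by
    simpa using partsInt _ (fun _ => (1:ℂ)) hpb (integrable_const 1)
  have hbd : ∀ (p : ℝ → ℂ), Integrable p muI → ∀ c : ℂ, ∀ t : ℝ,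
      ‖c + ∫ s in Set.Iio t, p s ∂muI‖ ≤ ‖c‖ + ∫ s, ‖p s‖ ∂muI := by
    intro p hp c t
    refine (norm_add_le _ _).trans (add_le_add le_rfl ?_)
    exact (norm_integral_le_integral_norm _).trans
      (setIntegral_le_integral hp.norm (Filter.Eventually.of_forall fun s => norm_nonneg _))
  have hsq : ∀ (p : ℝ → ℂ), Integrable p muI →
      ∀ hA : Integrable (fun t => ∫ s in Set.Iio t, p s ∂muI) muI, ∀ c : ℂ,
      Integrable (fun t => ‖c + ∫ s in Set.Iio t, p s ∂muI‖^2) muI := by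
    intro p hp hA c
    have hmeas : AEStronglyMeasurable (fun t => ‖c + ∫ s in Set.Iio t, p s ∂muI‖^2) muI := by
      have h1 : AEStronglyMeasurable (fun t => c + ∫ s in Set.Iio t, p s ∂muI) muI :=
        aestronglyMeasurable_const.add hA.1
      exact (h1.norm.mul h1.norm).congr
        (Filter.Eventually.of_forall fun t => (sq _).symm)
    refine (integrable_const ((‖c‖ + ∫ s, ‖p s‖ ∂muI)^2)).mono' hmeas
      (Filter.Eventually.of_forall fun t => ?_)
    rw [Real.norm_eq_abs, abs_of_nonneg (by positivity)]
    have := hbd p hp c t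
    have h0 : (0:ℝ) ≤ ‖c + ∫ s in Set.Iio t, p s ∂muI‖ := norm_nonneg _
    nlinarith
  have hsq0 := hsq _ hpa hA0 (f (-1) 0)
  have hsq1 := hsq _ hpb hA1 (f (-1) 1)
  -- norms of g
  have hg2' : Integrable (fun t => ‖g t‖^2) muI := by
    have h := hg2.integrable_norm_rpow two_ne_zero ENNReal.ofNat_ne_top
    refine h.congr (Filter.Eventually.of_forall fun t => ?_)
    rw [ENNReal.toReal_ofNat, show ((2:ℝ)) = ((2:ℕ):ℝ) by norm_num]
    simp only [Real.rpow_natCast]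
  have hgc : Integrable (fun t => ‖g t 0‖^2 + ‖g t 1‖^2) muI :=
    hg2'.congr (Filter.Eventually.of_forall fun t => norm_E2 (g t))
  -- a.e. coordinate representations
  have habar : ∀ᵐ t ∂muI, f t 0 = f (-1) 0 + ∫ s in Set.Iio t, g s 0 ∂muI :=
    hmem.mono fun t ht => hcoord t (Set.Ioo_subset_Icc_self ht) 0
  have hbbar : ∀ᵐ t ∂muI, f t 1 = f (-1) 1 + ∫ s in Set.Iio t, g s 1 ∂muI :=
    hmem.mono fun t ht => hcoord t (Set.Ioo_subset_Icc_self ht) 1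
  -- convert interval integrals to muI integrals
  have hivl : ∀ (h : ℝ → ℝ), (∫ t in (-1:ℝ)..1, h t) = ∫ t, h t ∂muI := by
    intro h
    rw [intervalIntegral.integral_of_le (by norm_num : (-1:ℝ) ≤ 1),
      integral_Ioc_eq_integral_Ioo, muI]
  rw [hivl, hivl, hivl]
  -- rewrite the main integrand
  have hmain : (∫ t, ‖vec2 (-(g t 1) + (k : ℂ) * f t 1 + (m : ℂ) * f t 0)
        (g t 0 + (k : ℂ) * f t 0 - (m : ℂ) * f t 1)‖^2 ∂muI)
      = ∫ t, ((‖g t 0‖^2 + ‖g t 1‖^2)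
          + (m^2+k^2)*(‖f (-1) 0 + ∫ s in Set.Iio t, g s 0 ∂muI‖^2
              + ‖f (-1) 1 + ∫ s in Set.Iio t, g s 1 ∂muI‖^2)
          + k*((((f (-1) 0 + ∫ s in Set.Iio t, g s 0 ∂muI) * (starRingEnd ℂ) (g t 0)
               + g t 0 * (starRingEnd ℂ) (f (-1) 0 + ∫ s in Set.Iio t, g s 0 ∂muI))
              - ((f (-1) 1 + ∫ s in Set.Iio t, g s 1 ∂muI) * (starRingEnd ℂ) (g t 1)
               + g t 1 * (starRingEnd ℂ) (f (-1) 1 + ∫ s in Set.Iio t, g s 1 ∂muI))).re)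
          + m*(-((((f (-1) 0 + ∫ s in Set.Iio t, g s 0 ∂muI) * (starRingEnd ℂ) (g t 1)
               + g t 0 * (starRingEnd ℂ) (f (-1) 1 + ∫ s in Set.Iio t, g s 1 ∂muI))
              + ((f (-1) 1 + ∫ s in Set.Iio t, g s 1 ∂muI) * (starRingEnd ℂ) (g t 0)
               + g t 1 * (starRingEnd ℂ) (f (-1) 0 + ∫ s in Set.Iio t, g s 0 ∂muI))).re))) ∂muI := by
    refine integral_congr_ae ?_
    filter_upwards [habar, hbbar] with t h0 h1
    rw [norm_vec2, h0, h1]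
    exact point_id k m _ _ _ _
  rw [hmain]
  -- split the integral
  have hI2 : Integrable (fun t => (m^2+k^2)*(‖f (-1) 0 + ∫ s in Set.Iio t, g s 0 ∂muI‖^2
      + ‖f (-1) 1 + ∫ s in Set.Iio t, g s 1 ∂muI‖^2)) muI := (hsq0.add hsq1).const_mul _
  have hI3 : Integrable (fun t =>
      k*((((f (-1) 0 + ∫ s in Set.Iio t, g s 0 ∂muI) * (starRingEnd ℂ) (g t 0)
               + g t 0 * (starRingEnd ℂ) (f (-1) 0 + ∫ s in Set.Iio t, g s 0 ∂muI))
              - ((f (-1) 1 + ∫ s in Set.Iio t, g s 1 ∂muI) * (starRingEnd ℂ) (g t 1)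
               + g t 1 * (starRingEnd ℂ) (f (-1) 1 + ∫ s in Set.Iio t, g s 1 ∂muI))).re)) muI :=
    ((W1i.sub W2i).re).const_mul k
  have hI4 : Integrable (fun t =>
      m*(-((((f (-1) 0 + ∫ s in Set.Iio t, g s 0 ∂muI) * (starRingEnd ℂ) (g t 1)
               + g t 0 * (starRingEnd ℂ) (f (-1) 1 + ∫ s in Set.Iio t, g s 1 ∂muI))
              + ((f (-1) 1 + ∫ s in Set.Iio t, g s 1 ∂muI) * (starRingEnd ℂ) (g t 0)
               + g t 1 * (starRingEnd ℂ) (f (-1) 0 + ∫ s in Set.Iio t, g s 0 ∂muI))).re))) muI :=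
    (((W3i.add W4i).re).neg).const_mul m
  have e1 := integral_add (μ := muI) hgc hI2
  have e2 := integral_add (μ := muI) (hgc.add hI2) hI3
  have e3 := integral_add (μ := muI) ((hgc.add hI2).add hI3) hI4
  simp only [Pi.add_apply] at e2 e3
  rw [e3, e2, e1, integral_const_mul, integral_const_mul, integral_const_mul]
  -- evaluate the cross terms
  have hK : (∫ t, ((((f (-1) 0 + ∫ s in Set.Iio t, g s 0 ∂muI) * (starRingEnd ℂ) (g t 0)
               + g t 0 * (starRingEnd ℂ) (f (-1) 0 + ∫ s in Set.Iio t, g s 0 ∂muI))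
              - ((f (-1) 1 + ∫ s in Set.Iio t, g s 1 ∂muI) * (starRingEnd ℂ) (g t 1)
               + g t 1 * (starRingEnd ℂ) (f (-1) 1 + ∫ s in Set.Iio t, g s 1 ∂muI))).re) ∂muI)
      = 0 := by
    have h1 : (∫ t, (((f (-1) 0 + ∫ s in Set.Iio t, g s 0 ∂muI) * (starRingEnd ℂ) (g t 0)
               + g t 0 * (starRingEnd ℂ) (f (-1) 0 + ∫ s in Set.Iio t, g s 0 ∂muI))
              - ((f (-1) 1 + ∫ s in Set.Iio t, g s 1 ∂muI) * (starRingEnd ℂ) (g t 1)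
               + g t 1 * (starRingEnd ℂ) (f (-1) 1 + ∫ s in Set.Iio t, g s 1 ∂muI))) ∂muI)
        = 0 := by
      rw [integral_sub W1i W2i, W1v, W2v, ← ha1, ← hb1, hB1, hBm]
      simp only [map_neg]
      ring
    have h2 := integral_re (W1i.sub W2i)
    calc (∫ t, ((((f (-1) 0 + ∫ s in Set.Iio t, g s 0 ∂muI) * (starRingEnd ℂ) (g t 0)
               + g t 0 * (starRingEnd ℂ) (f (-1) 0 + ∫ s in Set.Iio t, g s 0 ∂muI))
              - ((f (-1) 1 + ∫ s in Set.Iio t, g s 1 ∂muI) * (starRingEnd ℂ) (g t 1)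
               + g t 1 * (starRingEnd ℂ) (f (-1) 1 + ∫ s in Set.Iio t, g s 1 ∂muI))).re) ∂muI)
        = (∫ t, (((f (-1) 0 + ∫ s in Set.Iio t, g s 0 ∂muI) * (starRingEnd ℂ) (g t 0)
               + g t 0 * (starRingEnd ℂ) (f (-1) 0 + ∫ s in Set.Iio t, g s 0 ∂muI))
              - ((f (-1) 1 + ∫ s in Set.Iio t, g s 1 ∂muI) * (starRingEnd ℂ) (g t 1)
               + g t 1 * (starRingEnd ℂ) (f (-1) 1 + ∫ s in Set.Iio t, g s 1 ∂muI))) ∂muI).re := h2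
      _ = 0 := by rw [h1]; rfl
  have hM : (∫ t, (-((((f (-1) 0 + ∫ s in Set.Iio t, g s 0 ∂muI) * (starRingEnd ℂ) (g t 1)
               + g t 0 * (starRingEnd ℂ) (f (-1) 1 + ∫ s in Set.Iio t, g s 1 ∂muI))
              + ((f (-1) 1 + ∫ s in Set.Iio t, g s 1 ∂muI) * (starRingEnd ℂ) (g t 0)
               + g t 1 * (starRingEnd ℂ) (f (-1) 0 + ∫ s in Set.Iio t, g s 0 ∂muI))).re)) ∂muI)
      = ‖f 1‖^2 + ‖f (-1)‖^2 := by
    have h1 : (∫ t, (((f (-1) 0 + ∫ s in Set.Iio t, g s 0 ∂muI) * (starRingEnd ℂ) (g t 1)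
               + g t 0 * (starRingEnd ℂ) (f (-1) 1 + ∫ s in Set.Iio t, g s 1 ∂muI))
              + ((f (-1) 1 + ∫ s in Set.Iio t, g s 1 ∂muI) * (starRingEnd ℂ) (g t 0)
               + g t 1 * (starRingEnd ℂ) (f (-1) 0 + ∫ s in Set.Iio t, g s 0 ∂muI))) ∂muI)
        = -(f 1 0 * (starRingEnd ℂ) (f 1 0) + f 1 0 * (starRingEnd ℂ) (f 1 0)
            + (f (-1) 0 * (starRingEnd ℂ) (f (-1) 0) + f (-1) 0 * (starRingEnd ℂ) (f (-1) 0))) := by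
      rw [integral_add W3i W4i, W3v, W4v, ← ha1, ← hb1, hB1, hBm]
      simp only [map_neg]
      ring
    have h2 := integral_re ((W3i.add W4i).neg)
    have h3 : (∫ t, (-(((f (-1) 0 + ∫ s in Set.Iio t, g s 0 ∂muI) * (starRingEnd ℂ) (g t 1)
               + g t 0 * (starRingEnd ℂ) (f (-1) 1 + ∫ s in Set.Iio t, g s 1 ∂muI))
              + ((f (-1) 1 + ∫ s in Set.Iio t, g s 1 ∂muI) * (starRingEnd ℂ) (g t 0)
               + g t 1 * (starRingEnd ℂ) (f (-1) 0 + ∫ s in Set.Iio t, g s 0 ∂muI)))) ∂muI)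
        = (f 1 0 * (starRingEnd ℂ) (f 1 0) + f 1 0 * (starRingEnd ℂ) (f 1 0)
            + (f (-1) 0 * (starRingEnd ℂ) (f (-1) 0) + f (-1) 0 * (starRingEnd ℂ) (f (-1) 0))) := by
      rw [integral_neg, h1, neg_neg]
    calc (∫ t, (-((((f (-1) 0 + ∫ s in Set.Iio t, g s 0 ∂muI) * (starRingEnd ℂ) (g t 1)
               + g t 0 * (starRingEnd ℂ) (f (-1) 1 + ∫ s in Set.Iio t, g s 1 ∂muI))
              + ((f (-1) 1 + ∫ s in Set.Iio t, g s 1 ∂muI) * (starRingEnd ℂ) (g t 0)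
               + g t 1 * (starRingEnd ℂ) (f (-1) 0 + ∫ s in Set.Iio t, g s 0 ∂muI))).re)) ∂muI)
        = (∫ t, (-(((f (-1) 0 + ∫ s in Set.Iio t, g s 0 ∂muI) * (starRingEnd ℂ) (g t 1)
               + g t 0 * (starRingEnd ℂ) (f (-1) 1 + ∫ s in Set.Iio t, g s 1 ∂muI))
              + ((f (-1) 1 + ∫ s in Set.Iio t, g s 1 ∂muI) * (starRingEnd ℂ) (g t 0)
               + g t 1 * (starRingEnd ℂ) (f (-1) 0 + ∫ s in Set.Iio t, g s 0 ∂muI)))) ∂muI).re := h2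
      _ = ‖f 1‖^2 + ‖f (-1)‖^2 := by
        rw [h3, norm_E2 (f 1), norm_E2 (f (-1)), hB1, hBm]
        simp [Complex.add_re, Complex.mul_conj, Complex.normSq_eq_norm_sq,
          ← Complex.ofReal_pow]
  rw [hK, hM]
  -- final arithmetic
  have hgn : (∫ t, (‖g t 0‖^2 + ‖g t 1‖^2) ∂muI) = ∫ t, ‖g t‖^2 ∂muI :=
    integral_congr_ae (Filter.Eventually.of_forall fun t => (norm_E2 (g t)).symm)
  have hfn : (∫ t, (‖f (-1) 0 + ∫ s in Set.Iio t, g s 0 ∂muI‖^2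
      + ‖f (-1) 1 + ∫ s in Set.Iio t, g s 1 ∂muI‖^2) ∂muI) = ∫ t, ‖f t‖^2 ∂muI := by
    refine integral_congr_ae ?_
    filter_upwards [habar, hbbar] with t h0 h1
    rw [norm_E2 (f t), h0, h1]
  rw [hgn, hfn]
  ring
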